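/- With α the upper annihilating function for exponents n_1 < ⋯ < n_s, for all j < s and all t ≥ 1, n_j − α(j,j,t) ≤ n_s − α(s,s,t). More precisely, n_j − α(j,j,t) ≤ n_{j+1} − α(j+1,j+1,t) for each j < s. -/

import Mathlib

/-- The upper annihilating function `α(i,j,t)` associated to exponents `n 1 < ⋯ < n s`:
`α(s,s,1) = 1`, `α(i,j,1) = 0` otherwise, and for `t ≥ 2`, `α(i,j,t)` is the minimum of
`n j − n (j−1) + α(i,j−1,t−1)`, `n i − n (i−1) + α(i−1,j,t−1)`, `α(i,j,t−1) + 1`,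
`α(i+1,j,t−1)`, `α(i,j+1,t−1)`, omitting the terms whose indices fall outside `{1,…,s}`. -/
def alphaF (s : ℕ) (n : ℕ → ℕ) : ℕ → ℕ → ℕ → ℕ
  | _, _, 0 => 0
  | i, j, 1 => if i = s ∧ j = s then 1 else 0
  | i, j, t + 2 =>
      List.foldr min (alphaF s n i j (t + 1) + 1)
        ((if 2 ≤ j then [n j - n (j - 1) + alphaF s n i (j - 1) (t + 1)] else []) ++
         (if 2 ≤ i then [n i - n (i - 1) + alphaF s n (i - 1) j (t + 1)] else []) ++
         (if i + 1 ≤ s then [alphaF s n (i + 1) j (t + 1)] else []) ++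
         (if j + 1 ≤ s then [alphaF s n i (j + 1) (t + 1)] else []))

namespace AF

lemma foldr_min_le_base (b : ℕ) : ∀ l : List ℕ, List.foldr min b l ≤ b
  | [] => le_refl b
  | x :: l => le_trans (min_le_right _ _) (foldr_min_le_base b l)

lemma foldr_min_le_mem {x b : ℕ} : ∀ {l : List ℕ}, x ∈ l → List.foldr min b l ≤ x
  | y :: l, h => by
      rcases List.mem_cons.1 h with h | h
      · subst h; exact min_le_left _ _
      · exact le_trans (min_le_right _ _) (foldr_min_le_mem h)

lemma le_foldr_min {x C b : ℕ} : ∀ {l : List ℕ}, x ≤ C + b → (∀ y ∈ l, x ≤ C + y) →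
    x ≤ C + List.foldr min b l
  | [], hb, _ => hb
  | y :: l, hb, hl => by
      have h1 : x ≤ C + y := hl y List.mem_cons_self
      have h2 : x ≤ C + List.foldr min b l := le_foldr_min hb (fun z hz => hl z (List.mem_cons_of_mem _ hz))
      simp only [List.foldr_cons]
      rcases le_total y (List.foldr min b l) with h | h
      · rwa [min_eq_left h]
      · rwa [min_eq_right h]

variable (s : ℕ) (n : ℕ → ℕ)

lemma aF0 (i j : ℕ) : alphaF s n i j 0 = 0 := rfl

lemma aF1 (i j : ℕ) : alphaF s n i j 1 = if i = s ∧ j = s then 1 else 0 := rfl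

lemma aF1_le_one (i j : ℕ) : alphaF s n i j 1 ≤ 1 := by
  rw [aF1]; split <;> simp

lemma aF1_eq_zero {i j : ℕ} (h : ¬(i = s ∧ j = s)) : alphaF s n i j 1 = 0 := by
  rw [aF1, if_neg h]

lemma aF_step (i j t : ℕ) : alphaF s n i j (t+2) =
      List.foldr min (alphaF s n i j (t + 1) + 1)
        ((if 2 ≤ j then [n j - n (j - 1) + alphaF s n i (j - 1) (t + 1)] else []) ++
         (if 2 ≤ i then [n i - n (i - 1) + alphaF s n (i - 1) j (t + 1)] else []) ++
         (if i + 1 ≤ s then [alphaF s n (i + 1) j (t + 1)] else []) ++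
         (if j + 1 ≤ s then [alphaF s n i (j + 1) (t + 1)] else [])) := rfl

lemma rec_S (i j t : ℕ) : alphaF s n i j (t+2) ≤ alphaF s n i j (t+1) + 1 := by
  rw [aF_step]; exact foldr_min_le_base _ _

lemma rec_DJ {j : ℕ} (hj : 2 ≤ j) (i t : ℕ) :
    alphaF s n i j (t+2) ≤ n j - n (j - 1) + alphaF s n i (j - 1) (t + 1) := by
  rw [aF_step]; exact foldr_min_le_mem (by simp [hj])

lemma rec_DI {i : ℕ} (hi : 2 ≤ i) (j t : ℕ) :
    alphaF s n i j (t+2) ≤ n i - n (i - 1) + alphaF s n (i - 1) j (t + 1) := by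
  rw [aF_step]; exact foldr_min_le_mem (by simp [hi])

lemma rec_UI {i : ℕ} (hi : i + 1 ≤ s) (j t : ℕ) :
    alphaF s n i j (t+2) ≤ alphaF s n (i + 1) j (t + 1) := by
  rw [aF_step]; exact foldr_min_le_mem (by simp [hi])

lemma rec_UJ {j : ℕ} (hj : j + 1 ≤ s) (i t : ℕ) :
    alphaF s n i j (t+2) ≤ alphaF s n i (j + 1) (t + 1) := by
  rw [aF_step]; exact foldr_min_le_mem (by simp [hj])

lemma le_step_add {x C : ℕ} {i j t : ℕ}
    (h0 : x ≤ C + (alphaF s n i j (t+1) + 1))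
    (h1 : 2 ≤ j → x ≤ C + (n j - n (j - 1) + alphaF s n i (j - 1) (t + 1)))
    (h2 : 2 ≤ i → x ≤ C + (n i - n (i - 1) + alphaF s n (i - 1) j (t + 1)))
    (h3 : i + 1 ≤ s → x ≤ C + alphaF s n (i + 1) j (t + 1))
    (h4 : j + 1 ≤ s → x ≤ C + alphaF s n i (j + 1) (t + 1)) :
    x ≤ C + alphaF s n i j (t+2) := by
  rw [aF_step]
  refine le_foldr_min h0 ?_
  intro y hy
  simp only [List.mem_append] at hy
  rcases hy with ((hy | hy) | hy) | hy
  · by_cases hj : 2 ≤ j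
    · rw [if_pos hj] at hy; simp at hy; subst hy; exact h1 hj
    · rw [if_neg hj] at hy; simp at hy
  · by_cases hi : 2 ≤ i
    · rw [if_pos hi] at hy; simp at hy; subst hy; exact h2 hi
    · rw [if_neg hi] at hy; simp at hy
  · by_cases hi : i + 1 ≤ s
    · rw [if_pos hi] at hy; simp at hy; subst hy; exact h3 hi
    · rw [if_neg hi] at hy; simp at hy
  · by_cases hj : j + 1 ≤ s
    · rw [if_pos hj] at hy; simp at hy; subst hy; exact h4 hj
    · rw [if_neg hj] at hy; simp at hy

lemma le_step {x : ℕ} {i j t : ℕ}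
    (h0 : x ≤ alphaF s n i j (t+1) + 1)
    (h1 : 2 ≤ j → x ≤ n j - n (j - 1) + alphaF s n i (j - 1) (t + 1))
    (h2 : 2 ≤ i → x ≤ n i - n (i - 1) + alphaF s n (i - 1) j (t + 1))
    (h3 : i + 1 ≤ s → x ≤ alphaF s n (i + 1) j (t + 1))
    (h4 : j + 1 ≤ s → x ≤ alphaF s n i (j + 1) (t + 1)) :
    x ≤ alphaF s n i j (t+2) := by
  have := le_step_add s n (C := 0) (by simpa using h0) (by simpa using h1)
    (by simpa using h2) (by simpa using h3) (by simpa using h4)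
  simpa using this


-- ===== new material =====

variable (hg : ∀ m, 1 ≤ m → m + 1 ≤ s → n m < n (m + 1))

include hg in
lemma gap_pos {m : ℕ} (hm : 1 ≤ m) (hms : m + 1 ≤ s) : 1 ≤ n (m+1) - n m := by
  have := hg m hm hms; omega

lemma stay' (i j t : ℕ) : alphaF s n i j (t+1) ≤ alphaF s n i j t + 1 := by
  cases t with
  | zero => rw [aF0]; simpa using aF1_le_one s n i j
  | succ u => exact rec_S s n i j u

lemma upI' {i : ℕ} (hi : i + 1 ≤ s) (j t : ℕ) :
    alphaF s n i j (t+1) ≤ alphaF s n (i+1) j t := by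
  cases t with
  | zero =>
      rw [aF1_eq_zero s n (by rintro ⟨h, -⟩; omega)]
      exact Nat.zero_le _
  | succ u => exact rec_UI s n hi j u

lemma upJ' {j : ℕ} (hj : j + 1 ≤ s) (i t : ℕ) :
    alphaF s n i j (t+1) ≤ alphaF s n i (j+1) t := by
  cases t with
  | zero =>
      rw [aF1_eq_zero s n (by rintro ⟨-, h⟩; omega)]
      exact Nat.zero_le _
  | succ u => exact rec_UJ s n hj i u

include hg in
lemma dnI' {p : ℕ} (hp : 1 ≤ p) (hps : p + 1 ≤ s) (j t : ℕ) :
    alphaF s n (p+1) j (t+1) ≤ (n (p+1) - n p) + alphaF s n p j t := by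
  cases t with
  | zero =>
      rw [aF0]
      exact le_trans (aF1_le_one s n _ _) (by simpa using gap_pos s n hg hp hps)
  | succ u =>
      have h := rec_DI s n (i := p+1) (by omega) j u
      simpa using h

include hg in
lemma dnJ' {c : ℕ} (hc : 1 ≤ c) (hcs : c + 1 ≤ s) (i t : ℕ) :
    alphaF s n i (c+1) (t+1) ≤ (n (c+1) - n c) + alphaF s n i c t := by
  cases t with
  | zero =>
      rw [aF0]
      exact le_trans (aF1_le_one s n _ _) (by simpa using gap_pos s n hg hc hcs)
  | succ u =>
      have h := rec_DJ s n (j := c+1) (by omega) i u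
      simpa using h

include hg in
lemma TTi {p : ℕ} (hp : 1 ≤ p) (hps : p + 1 ≤ s) (j t : ℕ) :
    alphaF s n (p+1) j (t+2) ≤ (n (p+1) - n p) + alphaF s n (p+1) j t :=
  le_trans (dnI' s n hg hp hps j (t+1))
    (Nat.add_le_add_left (upI' s n hps j t) _)

include hg in
lemma TTj {c : ℕ} (hc : 1 ≤ c) (hcs : c + 1 ≤ s) (i t : ℕ) :
    alphaF s n i (c+1) (t+2) ≤ (n (c+1) - n c) + alphaF s n i (c+1) t :=
  le_trans (dnJ' s n hg hc hcs i (t+1))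
    (Nat.add_le_add_left (upJ' s n hcs i t) _)

lemma sym : ∀ t i j, alphaF s n i j t = alphaF s n j i t := by
  intro t
  induction t using Nat.strong_induction_on with
  | _ t IH =>
    match t with
    | 0 => intro i j; rw [aF0, aF0]
    | 1 => intro i j; rw [aF1, aF1, if_congr and_comm rfl rfl]
    | (u+2) =>
      have key : ∀ i j, alphaF s n i j (u+2) ≤ alphaF s n j i (u+2) := by
        intro i j
        refine le_step s n ?_ ?_ ?_ ?_ ?_
        · rw [IH (u+1) (by omega) j i]; exact rec_S s n i j u
        · intro hi
          rw [IH (u+1) (by omega) j (i-1)]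
          exact rec_DI s n hi j u
        · intro hj
          rw [IH (u+1) (by omega) (j-1) i]
          exact rec_DJ s n hj i u
        · intro hj
          rw [IH (u+1) (by omega) (j+1) i]
          exact rec_UJ s n hj i u
        · intro hi
          rw [IH (u+1) (by omega) j (i+1)]
          exact rec_UI s n hi j u
      intro i j
      exact le_antisymm (key i j) (key j i)


include hg in
lemma Tlem : ∀ t a b m, 1 ≤ b → b ≤ m → m + 2 ≤ a → a ≤ s →
    alphaF s n a b (t+2) ≤ (n (m+1) - n m) + alphaF s n a b t := by
  intro t
  induction t using Nat.strong_induction_on with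
  | _ t IH =>
    match t with
    | 0 =>
      intro a b m hb hbm hma has
      rw [aF0]
      have h1 : alphaF s n a b 1 = 0 := aF1_eq_zero s n (by rintro ⟨-, h⟩; omega)
      have h2 := stay' s n a b 1
      have h3 := gap_pos s n hg (le_trans hb hbm) (by omega)
      simp only [Nat.add_assoc, Nat.reduceAdd, Nat.zero_add] at h2 ⊢
      omega
    | 1 =>
      intro a b m hb hbm hma has
      rw [aF1_eq_zero s n (by rintro ⟨-, h⟩; omega)]
      have h1 : alphaF s n a b 3 ≤ alphaF s n a (b+1) 2 := upJ' s n (by omega) a 2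
      have h2 := stay' s n a (b+1) 1
      have h3 : alphaF s n a (b+1) 1 = 0 := aF1_eq_zero s n (by rintro ⟨-, h⟩; omega)
      have h4 := gap_pos s n hg (le_trans hb hbm) (by omega)
      simp only [Nat.add_assoc, Nat.reduceAdd, Nat.zero_add] at h1 h2 ⊢
      omega
    | (u+2) =>
      intro a b m hb hbm hma has
      refine le_step_add s n (C := n (m+1) - n m) (i := a) (j := b) (t := u) ?_ ?_ ?_ ?_ ?_
      · have h1 := stay' s n a b (u+3)
        have h2 := IH (u+1) (by omega) a b m hb hbm hma has
        simp only [Nat.add_assoc, Nat.reduceAdd] at h1 h2 ⊢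
        omega
      · intro hb2
        obtain ⟨c, rfl⟩ : ∃ c, b = c + 1 := ⟨b - 1, by omega⟩
        have h1 := dnJ' s n hg (c := c) (by omega) (by omega) a (u+3)
        have h2 := IH (u+1) (by omega) a c m (by omega) (by omega) hma has
        simp only [Nat.add_sub_cancel, Nat.reduceSubDiff, Nat.add_assoc, Nat.reduceAdd] at h1 h2 ⊢
        omega
      · intro ha2
        obtain ⟨p, rfl⟩ : ∃ p, a = p + 1 := ⟨a - 1, by omega⟩
        have h1 := dnI' s n hg (p := p) (by omega) (by omega) b (u+3)
        rcases Nat.lt_or_ge (m+1) p with h | h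
        · have h2 := IH (u+1) (by omega) p b m hb hbm (by omega) (by omega)
          simp only [Nat.add_sub_cancel, Nat.reduceSubDiff, Nat.add_assoc, Nat.reduceAdd] at h1 h2 ⊢
          omega
        · have hpm : p = m + 1 := by omega
          subst hpm
          have h2 := TTi s n hg (p := m) (by omega) (by omega) b (u+1)
          simp only [Nat.add_sub_cancel, Nat.reduceSubDiff, Nat.add_assoc, Nat.reduceAdd] at h1 h2 ⊢
          omega
      · intro ha
        have h1 := upI' s n (i := a) ha b (u+3)
        have h2 := IH (u+1) (by omega) (a+1) b m hb hbm (by omega) ha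
        simp only [Nat.add_assoc, Nat.reduceAdd] at h1 h2 ⊢
        omega
      · intro hbs
        have h1 := upJ' s n (j := b) hbs a (u+3)
        rcases Nat.lt_or_ge b m with h | h
        · have h2 := IH (u+1) (by omega) a (b+1) m (by omega) (by omega) hma has
          simp only [Nat.add_assoc, Nat.reduceAdd] at h1 h2 ⊢
          omega
        · have hbm' : b = m := by omega
          subst hbm'
          have h2 := TTj s n hg (c := b) hb hbs a (u+1)
          simp only [Nat.add_assoc, Nat.reduceAdd] at h1 h2 ⊢
          omega


include hg in
lemma master : ∀ r,
    (∀ i k m, 1 ≤ k → k ≤ i → i + 1 ≤ s → 1 ≤ m → k ≤ m + 1 → m + 1 ≤ i →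
      alphaF s n (i+1) k (r+1) ≤ (n (m+1) - n m) + alphaF s n i k r) ∧
    (∀ i c, 1 ≤ c → c + 1 ≤ i → i + 1 ≤ s →
      alphaF s n (i+1) (c+1) r ≤ (n (c+1) - n c) + alphaF s n i c r) ∧
    (∀ i j, 1 ≤ i → i ≤ j → j + 1 ≤ s →
      alphaF s n i (j+1) r ≤ alphaF s n i j (r+1)) ∧
    (∀ j, 1 ≤ j → j + 1 ≤ s →
      alphaF s n (j+1) (j+1) r ≤ (n (j+1) - n j) + alphaF s n j j r) := by
  intro r
  induction r using Nat.strong_induction_on with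
  | _ r IH =>
    match r with
    | 0 =>
      refine ⟨?_, ?_, ?_, ?_⟩
      · intro i k m hk hki his hm hkm hmi
        rw [aF1_eq_zero s n (by rintro ⟨-, h⟩; omega), aF0]
        exact Nat.zero_le _
      · intro i c hc hci his
        rw [aF0]; exact Nat.zero_le _
      · intro i j hi hij hjs
        rw [aF0]; exact Nat.zero_le _
      · intro j hj hjs
        rw [aF0]; exact Nat.zero_le _
    | 1 =>
      refine ⟨?_, ?_, ?_, ?_⟩
      · intro i k m hk hki his hm hkm hmi
        have h1 := stay' s n (i+1) k 1
        have h2 : alphaF s n (i+1) k 1 = 0 := aF1_eq_zero s n (by rintro ⟨-, h⟩; omega)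
        have h3 := gap_pos s n hg hm (by omega)
        simp only [Nat.add_assoc, Nat.reduceAdd] at h1 ⊢
        omega
      · intro i c hc hci his
        rw [aF1_eq_zero s n (by rintro ⟨-, h⟩; omega)]
        exact Nat.zero_le _
      · intro i j hi hij hjs
        rw [aF1_eq_zero s n (by rintro ⟨h, -⟩; omega)]
        exact Nat.zero_le _
      · intro j hj hjs
        have h1 := aF1_le_one s n (j+1) (j+1)
        have h2 := gap_pos s n hg hj hjs
        omega
    | (u+2) =>
      obtain ⟨Yp, Hp, Zp, Dp⟩ := IH (u+1) (by omega)
      obtain ⟨Y0, H0, Z0, D0⟩ := IH u (by omega)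
      -- ===== Y =====
      have hY : ∀ i k m, 1 ≤ k → k ≤ i → i + 1 ≤ s → 1 ≤ m → k ≤ m + 1 → m + 1 ≤ i →
          alphaF s n (i+1) k (u+3) ≤ (n (m+1) - n m) + alphaF s n i k (u+2) := by
        intro i k m hk hki his hm hkm hmi
        refine le_step_add s n (C := n (m+1) - n m) (i := i) (j := k) (t := u) ?_ ?_ ?_ ?_ ?_
        · have h1 := stay' s n (i+1) k (u+2)
          have h2 := Yp i k m hk hki his hm hkm hmi
          simp only [Nat.add_assoc, Nat.reduceAdd] at h1 h2 ⊢
          omega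
        · intro hk2
          obtain ⟨c, rfl⟩ : ∃ c, k = c + 1 := ⟨k - 1, by omega⟩
          have h1 := dnJ' s n hg (c := c) (by omega) (by omega) (i+1) (u+2)
          have h2 := Yp i c m (by omega) (by omega) his hm (by omega) hmi
          simp only [Nat.add_sub_cancel, Nat.add_assoc, Nat.reduceAdd] at h1 h2 ⊢
          omega
        · intro hi2
          rcases Nat.lt_or_ge k i with hlt | hge
          · obtain ⟨p, rfl⟩ : ∃ p, i = p + 1 := ⟨i - 1, by omega⟩
            have hT := Tlem s n hg (u+1) (p+2) k p hk (by omega) (by omega) (by omega)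
            have hY0 := Y0 (p+1) k m hk hki his hm hkm hmi
            have hZ0 := Z0 k p (by omega) (by omega) (by omega)
            have hs1 := sym s n u (p+1) k
            have hs2 := sym s n (u+1) k p
            simp only [Nat.add_sub_cancel, Nat.reduceSubDiff, Nat.add_assoc, Nat.reduceAdd]
              at hT hY0 hZ0 hs1 hs2 ⊢
            omega
          · have hki' : k = i := by omega
            have hmi' : m + 1 = i := by omega
            subst hki'
            obtain ⟨rfl⟩ : m + 1 = k := hmi'
            have hTT := TTj s n hg (c := m) hm (by omega) (m+2) (u+1)
            have hH := Hp (m+1) m hm (by omega) his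
            have hs := sym s n (u+1) (m+1) m
            simp only [Nat.add_sub_cancel, Nat.reduceSubDiff, Nat.add_assoc, Nat.reduceAdd]
              at hTT hH hs ⊢
            omega
        · intro his'
          rcases Nat.lt_or_ge m k with hlt | hge
          · have hkm' : k = m + 1 := by omega
            subst hkm'
            have hTT := TTj s n hg (c := m) hm (by omega) (i+1) (u+1)
            simp only [Nat.add_assoc, Nat.reduceAdd] at hTT ⊢
            omega
          · have hT := Tlem s n hg (u+1) (i+1) k m hk hge (by omega) his
            simp only [Nat.add_assoc, Nat.reduceAdd] at hT ⊢
            omega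
        · intro hks
          rcases Nat.lt_or_ge m k with hlt | hge
          · have hkm' : k = m + 1 := by omega
            subst hkm'
            have hTT := TTj s n hg (c := m) hm (by omega) (i+1) (u+1)
            have hs1 := sym s n (u+1) (i+1) (m+1)
            have hZp := Zp (m+1) i (by omega) (by omega) his
            have hup := upI' s n (i := m+1) (by omega) i (u+1)
            have hs2 := sym s n (u+1) (m+2) i
            simp only [Nat.add_assoc, Nat.reduceAdd] at hTT hs1 hZp hup hs2 ⊢
            omega
          · have h1 := upJ' s n (j := k) hks (i+1) (u+2)
            have h2 := Yp i (k+1) m (by omega) (by omega) his hm (by omega) hmi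
            simp only [Nat.add_assoc, Nat.reduceAdd] at h1 h2 ⊢
            omega
      -- ===== H =====
      have hH : ∀ i c, 1 ≤ c → c + 1 ≤ i → i + 1 ≤ s →
          alphaF s n (i+1) (c+1) (u+2) ≤ (n (c+1) - n c) + alphaF s n i c (u+2) := by
        intro i c hc hci his
        refine le_step_add s n (C := n (c+1) - n c) (i := i) (j := c) (t := u) ?_ ?_ ?_ ?_ ?_
        · have h1 := stay' s n (i+1) (c+1) (u+1)
          have h2 := Hp i c hc hci his
          simp only [Nat.add_assoc, Nat.reduceAdd] at h1 h2 ⊢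
          omega
        · intro hc2
          obtain ⟨e, rfl⟩ : ∃ e, c = e + 1 := ⟨c - 1, by omega⟩
          have h1 := dnJ' s n hg (c := e+1) (by omega) (by omega) (i+1) (u+1)
          have h2 := Hp i e (by omega) (by omega) his
          simp only [Nat.add_sub_cancel, Nat.reduceSubDiff, Nat.add_assoc, Nat.reduceAdd]
            at h1 h2 ⊢
          omega
        · intro hi2
          rcases Nat.lt_or_ge (c+1) i with hlt | hge
          · obtain ⟨p, rfl⟩ : ∃ p, i = p + 1 := ⟨i - 1, by omega⟩
            have hT := Tlem s n hg u (p+2) (c+1) p (by omega) (by omega) (by omega) (by omega)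
            have hH0 := H0 (p+1) c hc hci his
            have hZ0 := Z0 c p hc (by omega) (by omega)
            have hs1 := sym s n u (p+1) c
            have hs2 := sym s n (u+1) c p
            simp only [Nat.add_sub_cancel, Nat.reduceSubDiff, Nat.add_assoc, Nat.reduceAdd]
              at hT hH0 hZ0 hs1 hs2 ⊢
            omega
          · have hci' : i = c + 1 := by omega
            subst hci'
            have hYp := Yp (c+1) (c+1) c (by omega) (by omega) his hc (by omega) (by omega)
            have hDp := Dp c hc (by omega)
            simp only [Nat.add_sub_cancel, Nat.reduceSubDiff, Nat.add_assoc, Nat.reduceAdd]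
              at hYp hDp ⊢
            omega
        · intro his'
          have h1 := dnJ' s n hg (c := c) hc (by omega) (i+1) (u+1)
          simp only [Nat.add_assoc, Nat.reduceAdd] at h1 ⊢
          omega
        · intro hcs
          have h1 := Yp i (c+1) c (by omega) hci his hc (by omega) hci
          simp only [Nat.add_assoc, Nat.reduceAdd] at h1 ⊢
          omega
      -- ===== Z =====
      have hZ : ∀ i j, 1 ≤ i → i ≤ j → j + 1 ≤ s →
          alphaF s n i (j+1) (u+2) ≤ alphaF s n i j (u+3) := by
        intro i j hi hij hjs
        have hgoal : alphaF s n i (j+1) (u+2) ≤ alphaF s n i j (u+1+2) := by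
          refine le_step s n (i := i) (j := j) (t := u+1) ?_ ?_ ?_ ?_ ?_
          · have h1 := stay' s n i (j+1) (u+1)
            have h2 := Zp i j hi hij hjs
            simp only [Nat.add_assoc, Nat.reduceAdd] at h1 h2 ⊢
            omega
          · intro hj2
            obtain ⟨d, rfl⟩ : ∃ d, j = d + 1 := ⟨j - 1, by omega⟩
            rcases Nat.lt_or_ge i (d+1) with hlt | hge
            · have hT := Tlem s n hg u (d+2) i d hi (by omega) (by omega) (by omega)
              have hs1 := sym s n (u+2) i (d+2)
              have hs2 := sym s n u i (d+2)
              have hZ0 := Z0 i (d+1) hi (by omega) hjs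
              have hZp := Zp i d hi (by omega) (by omega)
              simp only [Nat.add_sub_cancel, Nat.reduceSubDiff, Nat.add_assoc, Nat.reduceAdd]
                at hT hs1 hs2 hZ0 hZp ⊢
              omega
            · have hij' : i = d + 1 := by omega
              subst hij'
              have hHH := hH (d+1) d (by omega) (by omega) hjs
              have hs1 := sym s n (u+2) (d+1) (d+2)
              simp only [Nat.add_sub_cancel, Nat.reduceSubDiff, Nat.add_assoc, Nat.reduceAdd]
                at hHH hs1 ⊢
              omega
          · intro hi2
            obtain ⟨p, rfl⟩ : ∃ p, i = p + 1 := ⟨i - 1, by omega⟩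
            have h1 := dnI' s n hg (p := p) (by omega) (by omega) (j+1) (u+1)
            have h2 := Zp p j (by omega) (by omega) hjs
            simp only [Nat.add_sub_cancel, Nat.reduceSubDiff, Nat.add_assoc, Nat.reduceAdd]
              at h1 h2 ⊢
            omega
          · intro his
            rcases Nat.lt_or_ge i j with hlt | hge
            · have h1 := upI' s n (i := i) his (j+1) (u+1)
              have h2 := Zp (i+1) j (by omega) (by omega) hjs
              simp only [Nat.add_assoc, Nat.reduceAdd] at h1 h2 ⊢
              omega
            · have hij' : i = j := by omega
              subst hij'
              have hs := sym s n (u+2) i (i+1)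
              simp only [Nat.add_assoc, Nat.reduceAdd] at hs ⊢
              omega
          · intro hjs'
            exact le_refl _
        simpa only [Nat.add_assoc, Nat.reduceAdd] using hgoal
      -- ===== D =====
      have hD : ∀ j, 1 ≤ j → j + 1 ≤ s →
          alphaF s n (j+1) (j+1) (u+2) ≤ (n (j+1) - n j) + alphaF s n j j (u+2) := by
        intro j hj hjs
        refine le_step_add s n (C := n (j+1) - n j) (i := j) (j := j) (t := u) ?_ ?_ ?_ ?_ ?_
        · have h1 := stay' s n (j+1) (j+1) (u+1)
          have h2 := Dp j hj hjs
          simp only [Nat.add_assoc, Nat.reduceAdd] at h1 h2 ⊢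
          omega
        · intro hj2
          obtain ⟨d, rfl⟩ : ∃ d, j = d + 1 := ⟨j - 1, by omega⟩
          have h1 := dnJ' s n hg (c := d+1) (by omega) hjs (d+2) (u+1)
          have h2 := Hp (d+1) d (by omega) (by omega) hjs
          simp only [Nat.add_sub_cancel, Nat.reduceSubDiff, Nat.add_assoc, Nat.reduceAdd]
            at h1 h2 ⊢
          omega
        · intro hj2
          obtain ⟨d, rfl⟩ : ∃ d, j = d + 1 := ⟨j - 1, by omega⟩
          have h1 := dnI' s n hg (p := d+1) (by omega) hjs (d+2) (u+1)
          have hs1 := sym s n (u+1) (d+1) (d+2)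
          have h2 := Hp (d+1) d (by omega) (by omega) hjs
          have hs2 := sym s n (u+1) (d+1) d
          simp only [Nat.add_sub_cancel, Nat.reduceSubDiff, Nat.add_assoc, Nat.reduceAdd]
            at h1 h2 hs1 hs2 ⊢
          omega
        · intro hjs'
          have h1 := dnJ' s n hg (c := j) hj hjs (j+1) (u+1)
          simp only [Nat.add_assoc, Nat.reduceAdd] at h1 ⊢
          omega
        · intro hjs'
          have h1 := dnI' s n hg (p := j) hj hjs (j+1) (u+1)
          simp only [Nat.add_assoc, Nat.reduceAdd] at h1 ⊢
          omega
      exact ⟨by simpa only [Nat.add_assoc, Nat.reduceAdd] using hY, hH, hZ, hD⟩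


include hg in
lemma Dlem (j t : ℕ) (hj : 1 ≤ j) (hjs : j + 1 ≤ s) :
    alphaF s n (j+1) (j+1) t ≤ (n (j+1) - n j) + alphaF s n j j t :=
  (master s n hg t).2.2.2 j hj hjs

end AF


/-- For `j < s` and `t ≥ 1`: `n j − α(j,j,t) ≤ n s − α(s,s,t)`, and more precisely
`n j − α(j,j,t) ≤ n (j+1) − α(j+1,j+1,t)`. -/
theorem stmt10 (s : ℕ) (n : ℕ → ℕ) (hs : 1 ≤ s)
    (hpos : ∀ k, 1 ≤ k → k ≤ s → 0 < n k)
    (hmono : ∀ k, 1 ≤ k → k + 1 ≤ s → n k < n (k + 1)) :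
    (∀ j t, 1 ≤ j → j + 1 ≤ s → 1 ≤ t →
      (n j : ℤ) - alphaF s n j j t ≤ (n s : ℤ) - alphaF s n s s t) ∧
    (∀ j t, 1 ≤ j → j + 1 ≤ s → 1 ≤ t →
      (n j : ℤ) - alphaF s n j j t ≤ (n (j + 1) : ℤ) - alphaF s n (j + 1) (j + 1) t) := by
  have part2 : ∀ j t, 1 ≤ j → j + 1 ≤ s →
      (n j : ℤ) - alphaF s n j j t ≤ (n (j + 1) : ℤ) - alphaF s n (j + 1) (j + 1) t := by
    intro j t hj hjs
    have hD := AF.Dlem s n hmono j t hj hjs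
    have hlt := hmono j hj hjs
    omega
  have part1 : ∀ d j t, 1 ≤ j → j + d = s →
      (n j : ℤ) - alphaF s n j j t ≤ (n s : ℤ) - alphaF s n s s t := by
    intro d
    induction d with
    | zero =>
      intro j t hj hd
      have : j = s := by omega
      subst this
      exact le_refl _
    | succ d ih =>
      intro j t hj hd
      have hjs : j + 1 ≤ s := by omega
      exact le_trans (part2 j t hj hjs) (ih (j+1) t (by omega) (by omega))
  exact ⟨fun j t hj hjs _ => part1 (s - j) j t hj (by omega),
         fun j t hj hjs _ => part2 j t hj hjs⟩
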